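/- Let d ≥ 2 be an integer and define F : ℂ → ℂ by F(z) = (z^{d+1} + (d−1)z)/d. Then for every z ∈ ℂ with |z| < 1, the iterates F^{∘k}(z) converge to 0 as k → ∞. -/

import Mathlib

open Filter Topology

/-- For `F(z) = (z^(d+1) + (d-1)z)/d`, the Newton map of `z^d/(z^d - 1)`, the open unit disk
is contained in the attracting basin of the origin: `F^[k] z → 0` for every `|z| < 1`. -/
theorem unit_disk_in_basin
    (d : ℕ) (hd : 2 ≤ d) (F : ℂ → ℂ)
    (hF : ∀ z, F z = (z ^ (d + 1) + ((d : ℂ) - 1) * z) / (d : ℂ))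
    (z : ℂ) (hz : ‖z‖ < 1) :
    Tendsto (fun k => F^[k] z) atTop (𝓝 0) := by
  have hd0 : (0:ℝ) < d := by positivity
  set r : ℝ := ‖z‖ with hr
  have hr0 : 0 ≤ r := norm_nonneg z
  set c : ℝ := (r ^ d + ((d:ℝ) - 1)) / d with hc
  have hc0 : 0 ≤ c := by
    apply div_nonneg _ hd0.le
    have : (1:ℝ) ≤ d := by exact_mod_cast Nat.one_le_of_lt hd
    nlinarith [pow_nonneg hr0 d]
  have hc1 : c < 1 := by
    rw [hc, div_lt_one hd0]
    have : r ^ d < 1 := pow_lt_one₀ hr0 hz (by omega)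
    linarith
  -- key step estimate
  have key : ∀ w : ℂ, ‖w‖ ≤ r → ‖F w‖ ≤ c * ‖w‖ := by
    intro w hw
    rw [hF, norm_div]
    have h1 : ‖w ^ (d+1)‖ = ‖w‖ ^ (d+1) := norm_pow _ _
    have h2 : ‖((d:ℂ) - 1) * w‖ = ((d:ℝ) - 1) * ‖w‖ := by
      rw [norm_mul]
      congr 1
      have : ((d:ℂ) - 1) = ((d - 1 : ℕ) : ℂ) := by push_cast [Nat.cast_sub (by omega : 1 ≤ d)]; ring
      rw [this, Complex.norm_natCast]
      push_cast [Nat.cast_sub (by omega : 1 ≤ d)]; ring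
    have h3 : ‖(d:ℂ)‖ = (d:ℝ) := by
      rw [Complex.norm_natCast]
    calc ‖w ^ (d+1) + ((d:ℂ) - 1) * w‖ / ‖(d:ℂ)‖
        ≤ (‖w‖ ^ (d+1) + ((d:ℝ) - 1) * ‖w‖) / d := by
          rw [h3]
          have htri := norm_add_le (w ^ (d+1)) (((d:ℂ) - 1) * w)
          rw [h1, h2] at htri
          gcongr
      _ ≤ c * ‖w‖ := by
          rw [hc, div_mul_eq_mul_div, div_le_div_iff_of_pos_right hd0]
          have hwle : ‖w‖ ^ d ≤ r ^ d := pow_le_pow_left₀ (norm_nonneg w) hw d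
          have : ‖w‖ ^ (d+1) = ‖w‖ ^ d * ‖w‖ := pow_succ _ _
          nlinarith [norm_nonneg w]
  -- iterate bound
  have bound : ∀ k, ‖F^[k] z‖ ≤ c ^ k * r ∧ ‖F^[k] z‖ ≤ r := by
    intro k
    induction k with
    | zero => simp [hr]
    | succ k ih =>
      obtain ⟨ih1, ih2⟩ := ih
      rw [Function.iterate_succ_apply']
      have h := key _ ih2
      constructor
      · calc ‖F (F^[k] z)‖ ≤ c * ‖F^[k] z‖ := h
          _ ≤ c * (c ^ k * r) := by exact mul_le_mul_of_nonneg_left ih1 hc0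
          _ = c ^ (k+1) * r := by ring
      · calc ‖F (F^[k] z)‖ ≤ c * ‖F^[k] z‖ := h
          _ ≤ 1 * r := mul_le_mul hc1.le ih2 (norm_nonneg _) zero_le_one
          _ = r := one_mul r
  rw [tendsto_zero_iff_norm_tendsto_zero]
  have hlim : Tendsto (fun k : ℕ => c ^ k * r) atTop (𝓝 0) := by
    simpa using (tendsto_pow_atTop_nhds_zero_of_lt_one hc0 hc1).mul_const r
  exact squeeze_zero (fun k => norm_nonneg _) (fun k => (bound k).1) hlim
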